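/- Let G be an abelian group, K a subgroup of G, H a group acting transitively on a set X, and x₀ ∈ X. In the permutational wreath product G ≀_X H = (⊕_X G) ⋊ H, the normal closure of the set {(δ_k, 1) : k ∈ K}, where δ_k is the function supported at x₀ with value k, equals the subgroup {(f, 1) : f(x) ∈ K for all x ∈ X}. -/

import Mathlib

/-!
Statement 8: Let `G` be an abelian group, `K ≤ G` a subgroup, `H` a group acting
transitively on a set `X`, and `x₀ ∈ X`.  In the permutational wreath product
`G ≀_X H = (⊕_X G) ⋊ H`, the normal closure of `{(δ_k, 1) : k ∈ K}` (where `δ_k` is the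
finitely supported function with value `k` at `x₀` and `0` elsewhere) equals the subgroup
`{(f, 1) : f(x) ∈ K for all x ∈ X}`.
-/

noncomputable section

/-- The bridge from additive automorphisms of `A` to multiplicative automorphisms of
`Multiplicative A`. -/
def bridge {A : Type} [AddCommGroup A] : Multiplicative (AddAut A) →* MulAut (Multiplicative A) where
  toFun e := AddEquiv.toMultiplicative (Multiplicative.toAdd e)
  map_one' := rfl
  map_mul' _ _ := rfl

/-- The permutation action of `H` on `⊕_X G`: `(h · f)(x) = f (h⁻¹ · x)`. -/
def shiftHomP (G X H : Type) [AddCommGroup G] [Group H] [MulAction H X] :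
    H →* MulAut (Multiplicative (X →₀ G)) :=
  bridge.comp (@DistribMulAction.toAddAut H (X →₀ G) _ _ Finsupp.comapDistribMulAction)

/-- The permutational wreath product `G ≀_X H = (⊕_X G) ⋊ H`. -/
abbrev PWreath (G X H : Type) [AddCommGroup G] [Group H] [MulAction H X] : Type :=
  Multiplicative (X →₀ G) ⋊[shiftHomP G X H] H

/-- The subgroup `⊕_X K = {(f, 1) : f(x) ∈ K for all x ∈ X}` of `G ≀_X H`. -/
def oplusK (G X H : Type) [AddCommGroup G] [Group H] [MulAction H X] (K : AddSubgroup G) :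
    Subgroup (PWreath G X H) where
  carrier := {w | w.right = 1 ∧ ∀ x : X, Multiplicative.toAdd w.left x ∈ K}
  one_mem' := ⟨rfl, fun x => by simpa using K.zero_mem⟩
  mul_mem' := by
    rintro a b ⟨ha1, ha2⟩ ⟨hb1, hb2⟩
    refine ⟨by simp [SemidirectProduct.mul_right, ha1, hb1], fun x => ?_⟩
    rw [SemidirectProduct.mul_left, ha1, map_one]
    simpa using K.add_mem (ha2 x) (hb2 x)
  inv_mem' := by
    rintro a ⟨ha1, ha2⟩
    refine ⟨by simp [SemidirectProduct.inv_right, ha1], fun x => ?_⟩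
    rw [SemidirectProduct.inv_left, ha1]
    simpa using K.neg_mem (ha2 x)

section Aux

attribute [local instance] Finsupp.comapSMul Finsupp.comapMulAction Finsupp.comapDistribMulAction

variable (G X H : Type) [AddCommGroup G] [Group H] [MulAction H X]

lemma shiftHomP_apply (h : H) (f : X →₀ G) :
    shiftHomP G X H h (Multiplicative.ofAdd f) = Multiplicative.ofAdd (h • f) := rfl

lemma shiftHomP_apply' (h : H) (f : Multiplicative (X →₀ G)) (x : X) :
    Multiplicative.toAdd (shiftHomP G X H h f) x = Multiplicative.toAdd f (h⁻¹ • x) :=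
  Finsupp.comapSMul_apply h (Multiplicative.toAdd f) x

lemma shiftHomP_single (h : H) (x₀ : X) (b : G) :
    shiftHomP G X H h (Multiplicative.ofAdd (Finsupp.single x₀ b))
      = Multiplicative.ofAdd (Finsupp.single (h • x₀) b) := by
  rw [shiftHomP_apply, Finsupp.comapSMul_single]

end Aux

instance oplusK_normal (G X H : Type) [AddCommGroup G] [Group H] [MulAction H X]
    (K : AddSubgroup G) : (oplusK G X H K).Normal := by
  constructor
  rintro n ⟨hn1, hn2⟩ g
  have hleft : (g * n * g⁻¹).left = shiftHomP G X H g.right n.left := by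
    simp only [SemidirectProduct.mul_left, SemidirectProduct.mul_right,
      SemidirectProduct.inv_left, SemidirectProduct.inv_right, hn1, mul_one, map_mul, map_inv]
    rw [MulAut.apply_inv_self, mul_comm g.left, mul_inv_cancel_right]
  refine ⟨by simp [SemidirectProduct.mul_right, SemidirectProduct.inv_right, hn1], fun x => ?_⟩
  rw [hleft, shiftHomP_apply']
  exact hn2 _

lemma mk_mul_mk (G X H : Type) [AddCommGroup G] [Group H] [MulAction H X]
    (a b : X →₀ G) :
    ((⟨Multiplicative.ofAdd a, 1⟩ : PWreath G X H) * ⟨Multiplicative.ofAdd b, 1⟩)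
      = ⟨Multiplicative.ofAdd (a + b), 1⟩ := by
  ext
  · simp [SemidirectProduct.mul_left]
  · simp [SemidirectProduct.mul_right]

lemma conj_mk (G X H : Type) [AddCommGroup G] [Group H] [MulAction H X]
    (h : H) (f : X →₀ G) :
    ((⟨1, h⟩ : PWreath G X H) * ⟨Multiplicative.ofAdd f, 1⟩ * (⟨1, h⟩ : PWreath G X H)⁻¹)
      = ⟨shiftHomP G X H h (Multiplicative.ofAdd f), 1⟩ := by
  ext
  · simp [SemidirectProduct.mul_left, SemidirectProduct.inv_left,
      SemidirectProduct.mul_right]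
  · simp [SemidirectProduct.mul_right, SemidirectProduct.inv_right]

theorem normalClosure_delta_eq_oplusK (G X H : Type) [AddCommGroup G] [Group H]
    [MulAction H X] [MulAction.IsPretransitive H X] (x₀ : X) (K : AddSubgroup G) :
    Subgroup.normalClosure
        {w : PWreath G X H | ∃ k ∈ K, w = ⟨Multiplicative.ofAdd (Finsupp.single x₀ k), 1⟩}
      = oplusK G X H K := by
  classical
  set S := {w : PWreath G X H | ∃ k ∈ K, w = ⟨Multiplicative.ofAdd (Finsupp.single x₀ k), 1⟩}
  apply le_antisymm
  · apply Subgroup.normalClosure_le_normal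
    rintro w ⟨k, hk, rfl⟩
    refine ⟨rfl, fun x => ?_⟩
    show Finsupp.single x₀ k x ∈ K
    rw [Finsupp.single_apply]
    split
    · exact hk
    · exact K.zero_mem
  · have key : ∀ f : X →₀ G, (∀ x, f x ∈ K) →
        (⟨Multiplicative.ofAdd f, 1⟩ : PWreath G X H) ∈ Subgroup.normalClosure S := by
      intro f
      induction f using Finsupp.induction with
      | zero => intro _; exact Subgroup.one_mem _
      | single_add a b f ha hb ih =>
        intro hmem
        have hbK : b ∈ K := by
          have := hmem a
          rwa [Finsupp.add_apply, Finsupp.single_eq_same,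
            Finsupp.notMem_support_iff.mp ha, add_zero] at this
        have hfK : ∀ x, f x ∈ K := by
          intro x
          rcases eq_or_ne x a with rfl | hx
          · rw [Finsupp.notMem_support_iff.mp ha]; exact K.zero_mem
          · have := hmem x
            rwa [Finsupp.add_apply, Finsupp.single_eq_of_ne hx, zero_add] at this
        have hsingle : (⟨Multiplicative.ofAdd (Finsupp.single a b), 1⟩ : PWreath G X H)
            ∈ Subgroup.normalClosure S := by
          obtain ⟨h, hh⟩ := MulAction.exists_smul_eq H x₀ a
          have hgen : (⟨Multiplicative.ofAdd (Finsupp.single x₀ b), 1⟩ : PWreath G X H)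
              ∈ Subgroup.normalClosure S :=
            Subgroup.subset_normalClosure ⟨b, hbK, rfl⟩
          have := (Subgroup.normalClosure_normal (s := S)).conj_mem _ hgen ⟨1, h⟩
          rwa [conj_mk, shiftHomP_single, hh] at this
        have := (Subgroup.normalClosure S).mul_mem hsingle (ih hfK)
        rwa [mk_mul_mk] at this
    rintro ⟨f, h⟩ ⟨hh, hf⟩
    simp only at hh
    subst hh
    exact key (Multiplicative.toAdd f) hf


end
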